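/- Upper bound for continuous connectives via polynomial approximation: Let ε ∈ (0,1), let g : ℝ → ℝ, and suppose p(t) = a_0 + ∑_{d=1}^D a_d t^d is a real polynomial with |g(t) − p(t)| ≤ ε/4 for all t ∈ [−1,1]. Set A = ∑_{d=1}^D |a_d| and assume A > 0. Let H be a real inner product space and let x_1,…,x_k and y_1,…,y_k be vectors in H with ‖x_i‖ ≤ 1 and ‖y_i‖ ≤ 1, such that g(⟪x_i,y_j⟫) − g(⟪x_j,y_i⟫) ≥ ε for all 1 ≤ i < j ≤ k. Then log k ≤ 2πA/ε + 1. -/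

import Mathlib

open RealInnerProductSpace Real Finset Matrix intervalIntegral

/- ### Auxiliary lemmas -/

lemma ccub_cs_lemma {H : Type*} [NormedAddCommGroup H] [InnerProductSpace ℝ H] {k : ℕ}
    (z w : Fin k → H) (u v : Fin k → ℝ) (d : ℕ) :
    |∑ i, ∑ j, u i * v j * (⟪z i, w j⟫) ^ d| ≤
      ((∑ i, ∑ j, u i * u j * (⟪z i, z j⟫) ^ d) +
       (∑ i, ∑ j, v i * v j * (⟪w i, w j⟫) ^ d)) / 2 := by
  classical
  set Z : Fin k ⊕ Fin k → H := Sum.elim z w with hZ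
  set G : Matrix (Fin k ⊕ Fin k) (Fin k ⊕ Fin k) ℝ :=
    Matrix.of (fun a b => ⟪Z a, Z b⟫) with hGdef
  have expand : ∀ c : Fin k ⊕ Fin k → ℝ,
      ⟪∑ a, c a • Z a, ∑ b, c b • Z b⟫ = ∑ a, ∑ b, c a * c b * ⟪Z a, Z b⟫ := by
    intro c
    rw [sum_inner]
    refine Finset.sum_congr rfl fun a _ => ?_
    simp only [inner_sum, real_inner_smul_left, real_inner_smul_right]
    exact Finset.sum_congr rfl fun b _ => by ring
  have hPSD : G.PosSemidef := by
    refine Matrix.posSemidef_iff_dotProduct_mulVec.mpr ⟨?_, ?_⟩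
    · ext a b
      simp [hGdef, Matrix.conjTranspose_apply, real_inner_comm]
    · intro c
      have h1 : dotProduct (star c) (G.mulVec c) = ∑ a, ∑ b, c a * c b * ⟪Z a, Z b⟫ := by
        rw [hGdef]
        simp only [dotProduct, Matrix.mulVec, Matrix.of_apply, Pi.star_apply,
          star_trivial, Finset.mul_sum]
        exact Finset.sum_congr rfl fun a _ => Finset.sum_congr rfl fun b _ => by ring
      rw [h1, ← expand]
      exact real_inner_self_nonneg
  obtain ⟨B, hB⟩ : ∃ B : Matrix (Fin k ⊕ Fin k) (Fin k ⊕ Fin k) ℝ, G = Bᴴ * B := by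
    open MatrixOrder in
    exact ⟨CFC.sqrt G, by
      rw [← Matrix.star_eq_conjTranspose, (CFC.sqrt_nonneg G).isSelfAdjoint.star_eq,
        CFC.sqrt_mul_sqrt_self G hPSD.nonneg]⟩
  have hfact : ∀ a b, ⟪Z a, Z b⟫ = ∑ r, B r a * B r b := by
    intro a b
    have h2 : G a b = (Bᴴ * B) a b := by rw [← hB]
    rw [hGdef] at h2
    simpa [Matrix.mul_apply, Matrix.conjTranspose_apply] using h2
  set S := Fintype.piFinset (fun _ : Fin d => (univ : Finset (Fin k ⊕ Fin k))) with hS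
  set M : (Fin d → (Fin k ⊕ Fin k)) → (Fin k ⊕ Fin k) → ℝ :=
    fun f a => ∏ t, B (f t) a with hM
  have hpow : ∀ a b, ⟪Z a, Z b⟫ ^ d = ∑ f ∈ S, M f a * M f b := by
    intro a b
    rw [hfact a b]
    have h2 : (∑ r, B r a * B r b) ^ d = ∏ _t : Fin d, (∑ r, B r a * B r b) := by
      rw [Finset.prod_const, Finset.card_univ, Fintype.card_fin]
    rw [h2, Finset.prod_univ_sum]
    exact Finset.sum_congr rfl fun f _ => by rw [← Finset.prod_mul_distrib]
  have hrepr : ∀ (c c' : Fin k → ℝ) (p p' : Fin k → Fin k ⊕ Fin k),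
      ∑ i, ∑ j, c i * c' j * ⟪Z (p i), Z (p' j)⟫ ^ d
        = ∑ f ∈ S, (∑ i, c i * M f (p i)) * (∑ j, c' j * M f (p' j)) := by
    intro c c' p p'
    simp only [hpow]
    calc ∑ i, ∑ j, c i * c' j * ∑ f ∈ S, M f (p i) * M f (p' j)
        = ∑ i, ∑ f ∈ S, ∑ j, c i * c' j * (M f (p i) * M f (p' j)) := by
          refine Finset.sum_congr rfl fun i _ => ?_
          rw [Finset.sum_comm]
          exact Finset.sum_congr rfl fun j _ => by rw [Finset.mul_sum]
      _ = ∑ f ∈ S, ∑ i, ∑ j, c i * c' j * (M f (p i) * M f (p' j)) := Finset.sum_comm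
      _ = ∑ f ∈ S, (∑ i, c i * M f (p i)) * (∑ j, c' j * M f (p' j)) := by
          refine Finset.sum_congr rfl fun f _ => ?_
          rw [Finset.sum_mul_sum]
          exact Finset.sum_congr rfl fun i _ => Finset.sum_congr rfl fun j _ => by ring
  have h1 := hrepr u v Sum.inl Sum.inr
  have h2 := hrepr u u Sum.inl Sum.inl
  have h3 := hrepr v v Sum.inr Sum.inr
  simp only [hZ, Sum.elim_inl, Sum.elim_inr] at h1 h2 h3
  rw [h1, h2, h3]
  calc |∑ f ∈ S, (∑ i, u i * M f (Sum.inl i)) * (∑ j, v j * M f (Sum.inr j))|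
      ≤ ∑ f ∈ S, |(∑ i, u i * M f (Sum.inl i)) * (∑ j, v j * M f (Sum.inr j))| :=
        Finset.abs_sum_le_sum_abs _ _
    _ ≤ ∑ f ∈ S, ((∑ i, u i * M f (Sum.inl i)) * (∑ i, u i * M f (Sum.inl i))
          + (∑ j, v j * M f (Sum.inr j)) * (∑ j, v j * M f (Sum.inr j))) / 2 := by
        refine Finset.sum_le_sum fun f _ => ?_
        set U := ∑ i, u i * M f (Sum.inl i)
        set V := ∑ j, v j * M f (Sum.inr j)
        rw [abs_mul]
        nlinarith [sq_nonneg (|U| - |V|), abs_nonneg U, abs_nonneg V,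
          abs_mul_abs_self U, abs_mul_abs_self V]
    _ = ((∑ f ∈ S, (∑ i, u i * M f (Sum.inl i)) * (∑ i, u i * M f (Sum.inl i)))
          + ∑ f ∈ S, (∑ j, v j * M f (Sum.inr j)) * (∑ j, v j * M f (Sum.inr j))) / 2 := by
        rw [← Finset.sum_add_distrib, ← Finset.sum_div]

lemma ccub_int_cos_zero (m : ℤ) (hm : m ≠ 0) :
    ∫ θ in (0:ℝ)..(2*π), Real.cos ((m:ℝ) * θ) = 0 := by
  have hm' : (m:ℝ) ≠ 0 := Int.cast_ne_zero.mpr hm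
  rw [intervalIntegral.integral_comp_mul_left Real.cos hm']
  have h1 : Real.sin ((m:ℝ) * (2*π)) = 0 := by
    have : (m:ℝ) * (2*π) = ((2*m : ℤ) : ℝ) * π := by push_cast; ring
    rw [this, Real.sin_int_mul_pi]
  simp [integral_cos, h1]

lemma ccub_int_saw (m : ℤ) (hm : m ≠ 0) :
    ∫ θ in (0:ℝ)..(2*π), (π - θ)/2 * Real.sin ((m:ℝ)*θ) = π / m := by
  have hm' : (m:ℝ) ≠ 0 := Int.cast_ne_zero.mpr hm
  have hderiv : ∀ θ ∈ Set.uIcc (0:ℝ) (2*π),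
      HasDerivAt (fun s : ℝ => (s - π)/(2*m) * Real.cos ((m:ℝ)*s) - Real.sin ((m:ℝ)*s)/(2*(m:ℝ)^2))
        ((π - θ)/2 * Real.sin ((m:ℝ)*θ)) θ := by
    intro θ _
    have hc : HasDerivAt (fun s : ℝ => Real.cos ((m:ℝ)*s)) (-Real.sin ((m:ℝ)*θ) * ((m:ℝ)*1)) θ :=
      ((hasDerivAt_id θ).const_mul (m:ℝ)).cos
    have hs : HasDerivAt (fun s : ℝ => Real.sin ((m:ℝ)*s)) (Real.cos ((m:ℝ)*θ) * ((m:ℝ)*1)) θ :=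
      ((hasDerivAt_id θ).const_mul (m:ℝ)).sin
    have hlin : HasDerivAt (fun s : ℝ => (s - π)/(2*(m:ℝ))) (1/(2*(m:ℝ))) θ := by
      simpa using ((hasDerivAt_id θ).sub_const π).div_const (2*(m:ℝ))
    have := (hlin.mul hc).sub (hs.div_const (2*(m:ℝ)^2))
    refine this.congr_deriv ?_
    field_simp
    ring
  have hint : IntervalIntegrable (fun θ : ℝ => (π - θ)/2 * Real.sin ((m:ℝ)*θ))
      MeasureTheory.volume 0 (2*π) := (by fun_prop : Continuous _).intervalIntegrable _ _
  rw [intervalIntegral.integral_eq_sub_of_hasDerivAt hderiv hint]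
  have h1 : Real.sin ((m:ℝ) * (2*π)) = 0 := by
    have : (m:ℝ) * (2*π) = ((2*m : ℤ) : ℝ) * π := by push_cast; ring
    rw [this, Real.sin_int_mul_pi]
  have h2 : Real.cos ((m:ℝ) * (2*π)) = 1 := Real.cos_int_mul_two_pi m
  rw [h1, h2]
  simp
  field_simp
  ring

lemma ccub_int_cc (p q : ℕ) (hq : q ≠ 0) :
    ∫ θ in (0:ℝ)..(2*π), Real.cos ((p:ℝ)*θ) * Real.cos ((q:ℝ)*θ)
      = if p = q then π else 0 := by
  have hid : ∀ θ : ℝ, Real.cos ((p:ℝ)*θ) * Real.cos ((q:ℝ)*θ)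
      = (Real.cos ((((p:ℤ) - q : ℤ):ℝ)*θ) + Real.cos ((((p:ℤ) + q : ℤ):ℝ)*θ))/2 := by
    intro θ
    have e1 : ((((p:ℤ) - q : ℤ)):ℝ)*θ = (p:ℝ)*θ - (q:ℝ)*θ := by push_cast; ring
    have e2 : ((((p:ℤ) + q : ℤ)):ℝ)*θ = (p:ℝ)*θ + (q:ℝ)*θ := by push_cast; ring
    rw [e1, e2, Real.cos_sub, Real.cos_add]
    ring
  have hi1 : IntervalIntegrable (fun θ : ℝ => Real.cos ((((p:ℤ) - q : ℤ):ℝ)*θ))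
      MeasureTheory.volume 0 (2*π) := (by fun_prop : Continuous _).intervalIntegrable _ _
  have hi2 : IntervalIntegrable (fun θ : ℝ => Real.cos ((((p:ℤ) + q : ℤ):ℝ)*θ))
      MeasureTheory.volume 0 (2*π) := (by fun_prop : Continuous _).intervalIntegrable _ _
  calc ∫ θ in (0:ℝ)..(2*π), Real.cos ((p:ℝ)*θ) * Real.cos ((q:ℝ)*θ)
      = ∫ θ in (0:ℝ)..(2*π), (Real.cos ((((p:ℤ) - q : ℤ):ℝ)*θ)
          + Real.cos ((((p:ℤ) + q : ℤ):ℝ)*θ))/2 := by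
        exact intervalIntegral.integral_congr (fun θ _ => hid θ)
    _ = ((∫ θ in (0:ℝ)..(2*π), Real.cos ((((p:ℤ) - q : ℤ):ℝ)*θ))
          + ∫ θ in (0:ℝ)..(2*π), Real.cos ((((p:ℤ) + q : ℤ):ℝ)*θ))/2 := by
        rw [intervalIntegral.integral_div, intervalIntegral.integral_add hi1 hi2]
    _ = if p = q then π else 0 := by
        have h2 : (∫ θ in (0:ℝ)..(2*π), Real.cos ((((p:ℤ) + q : ℤ):ℝ)*θ)) = 0 :=
          ccub_int_cos_zero _ (by omega)
        rcases eq_or_ne p q with h | h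
        · subst h
          have : ((p:ℤ) - p : ℤ) = 0 := by ring
          rw [this, h2]
          norm_num
        · have h1 : (∫ θ in (0:ℝ)..(2*π), Real.cos ((((p:ℤ) - q : ℤ):ℝ)*θ)) = 0 :=
            ccub_int_cos_zero _ (by omega)
          rw [h1, h2]
          simp [h]

lemma ccub_int_ss (p q : ℕ) (hq : q ≠ 0) :
    ∫ θ in (0:ℝ)..(2*π), Real.sin ((p:ℝ)*θ) * Real.sin ((q:ℝ)*θ)
      = if p = q then π else 0 := by
  have hid : ∀ θ : ℝ, Real.sin ((p:ℝ)*θ) * Real.sin ((q:ℝ)*θ)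
      = (Real.cos ((((p:ℤ) - q : ℤ):ℝ)*θ) - Real.cos ((((p:ℤ) + q : ℤ):ℝ)*θ))/2 := by
    intro θ
    have e1 : ((((p:ℤ) - q : ℤ)):ℝ)*θ = (p:ℝ)*θ - (q:ℝ)*θ := by push_cast; ring
    have e2 : ((((p:ℤ) + q : ℤ)):ℝ)*θ = (p:ℝ)*θ + (q:ℝ)*θ := by push_cast; ring
    rw [e1, e2, Real.cos_sub, Real.cos_add]
    ring
  have hi1 : IntervalIntegrable (fun θ : ℝ => Real.cos ((((p:ℤ) - q : ℤ):ℝ)*θ))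
      MeasureTheory.volume 0 (2*π) := (by fun_prop : Continuous _).intervalIntegrable _ _
  have hi2 : IntervalIntegrable (fun θ : ℝ => Real.cos ((((p:ℤ) + q : ℤ):ℝ)*θ))
      MeasureTheory.volume 0 (2*π) := (by fun_prop : Continuous _).intervalIntegrable _ _
  calc ∫ θ in (0:ℝ)..(2*π), Real.sin ((p:ℝ)*θ) * Real.sin ((q:ℝ)*θ)
      = ∫ θ in (0:ℝ)..(2*π), (Real.cos ((((p:ℤ) - q : ℤ):ℝ)*θ)
          - Real.cos ((((p:ℤ) + q : ℤ):ℝ)*θ))/2 := by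
        exact intervalIntegral.integral_congr (fun θ _ => hid θ)
    _ = ((∫ θ in (0:ℝ)..(2*π), Real.cos ((((p:ℤ) - q : ℤ):ℝ)*θ))
          - ∫ θ in (0:ℝ)..(2*π), Real.cos ((((p:ℤ) + q : ℤ):ℝ)*θ))/2 := by
        rw [intervalIntegral.integral_div, intervalIntegral.integral_sub hi1 hi2]
    _ = if p = q then π else 0 := by
        have h2 : (∫ θ in (0:ℝ)..(2*π), Real.cos ((((p:ℤ) + q : ℤ):ℝ)*θ)) = 0 :=
          ccub_int_cos_zero _ (by omega)
        rcases eq_or_ne p q with h | h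
        · subst h
          have : ((p:ℤ) - p : ℤ) = 0 := by ring
          rw [this, h2]
          norm_num
        · have h1 : (∫ θ in (0:ℝ)..(2*π), Real.cos ((((p:ℤ) - q : ℤ):ℝ)*θ)) = 0 :=
            ccub_int_cos_zero _ (by omega)
          rw [h1, h2]
          simp [h]

lemma ccub_harm (n : ℕ) : Real.log (n+1) ≤ ∑ m ∈ Finset.range n, 1/((m:ℝ)+1) := by
  induction n with
  | zero => simp
  | succ n ih =>
    rw [Finset.sum_range_succ]
    have h1 : Real.log ((n:ℝ)+1+1) - Real.log ((n:ℝ)+1) ≤ 1/((n:ℝ)+1) := by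
      have hpos2 : (0:ℝ) < ((n:ℝ)+1+1)/((n:ℝ)+1) := by positivity
      have h := Real.log_le_sub_one_of_pos hpos2
      rw [Real.log_div (by positivity) (by positivity)] at h
      have e : ((n:ℝ)+1+1)/((n:ℝ)+1) - 1 = 1/((n:ℝ)+1) := by field_simp; ring
      linarith [e ▸ h]
    push_cast
    push_cast at ih
    linarith

lemma ccub_logfac (n : ℕ) :
    (n:ℝ) * Real.log n - n ≤ ∑ r ∈ Finset.range n, Real.log ((r:ℝ)+1) := by
  induction n with
  | zero => simp
  | succ n ih =>
    rw [Finset.sum_range_succ]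
    have key : (n:ℝ) * Real.log ((n:ℝ)+1) - (n:ℝ) * Real.log n ≤ 1 := by
      rcases Nat.eq_zero_or_pos n with h | h
      · subst h; simp
      · have hn : (0:ℝ) < n := by exact_mod_cast h
        have hpos2 : (0:ℝ) < ((n:ℝ)+1)/(n:ℝ) := by positivity
        have hl := Real.log_le_sub_one_of_pos hpos2
        rw [Real.log_div (by positivity) (by positivity)] at hl
        have e : ((n:ℝ)+1)/(n:ℝ) - 1 = 1/(n:ℝ) := by field_simp; ring
        rw [e] at hl
        have h3 : (n:ℝ) * (Real.log ((n:ℝ)+1) - Real.log n) ≤ (n:ℝ) * (1/(n:ℝ)) :=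
          mul_le_mul_of_nonneg_left hl (by positivity)
        rw [mul_one_div, div_self (ne_of_gt hn)] at h3
        linarith
    push_cast
    push_cast at ih
    nlinarith [key, ih]

lemma ccub_pair {k : ℕ} (F : Fin k → Fin k → ℝ) (hsym : ∀ i j, F j i = F i j)
    (hdiag : ∀ i, F i i = 0) :
    ∑ i, ∑ j, F i j = 2 * ∑ j : Fin k, ∑ i : Fin k, (if i < j then F i j else 0) := by
  have tri : ∀ i j : Fin k, F i j
      = (if i < j then F i j else 0) + (if j < i then F i j else 0) := by
    intro i j
    rcases lt_trichotomy i j with h | h | h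
    · simp [h, asymm h]
    · subst h; simp [lt_irrefl, hdiag]
    · simp [h, asymm h, not_lt_of_gt h]
  calc ∑ i, ∑ j, F i j
      = ∑ i, ∑ j, ((if i < j then F i j else 0) + (if j < i then F i j else 0)) := by
        exact Finset.sum_congr rfl fun i _ => Finset.sum_congr rfl fun j _ => tri i j
    _ = (∑ i, ∑ j, (if i < j then F i j else 0)) + ∑ i, ∑ j, (if j < i then F i j else 0) := by
        rw [← Finset.sum_add_distrib]
        exact Finset.sum_congr rfl fun i _ => Finset.sum_add_distrib
    _ = 2 * ∑ j : Fin k, ∑ i : Fin k, (if i < j then F i j else 0) := by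
        have h1 : (∑ i : Fin k, ∑ j : Fin k, (if i < j then F i j else 0))
            = ∑ j : Fin k, ∑ i : Fin k, (if i < j then F i j else 0) := Finset.sum_comm
        have h2 : (∑ i : Fin k, ∑ j : Fin k, (if j < i then F i j else 0))
            = ∑ j : Fin k, ∑ i : Fin k, (if i < j then F i j else 0) := by
          refine Finset.sum_congr rfl fun a _ => Finset.sum_congr rfl fun b _ => ?_
          rw [hsym a b]
        rw [h1, h2]; ring

lemma ccub_innerharm {k : ℕ} (j : Fin k) :
    ∑ i : Fin k, (if i < j then (1:ℝ)/(((j:ℕ):ℝ) - ((i:ℕ):ℝ)) else 0)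
      = ∑ m ∈ Finset.range (j:ℕ), 1/((m:ℝ)+1) := by
  have step1 : ∑ i : Fin k, (if i < j then (1:ℝ)/(((j:ℕ):ℝ) - ((i:ℕ):ℝ)) else 0)
      = ∑ m ∈ Finset.range k, (if m < (j:ℕ) then (1:ℝ)/(((j:ℕ):ℝ) - (m:ℝ)) else 0) := by
    rw [← Fin.sum_univ_eq_sum_range (fun m => if m < (j:ℕ) then (1:ℝ)/(((j:ℕ):ℝ) - (m:ℝ)) else 0) k]
    exact Finset.sum_congr rfl fun i _ => by simp only [Fin.lt_def]
  rw [step1, ← Finset.sum_filter]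
  have hfil : (Finset.range k).filter (fun m => m < (j:ℕ)) = Finset.range (j:ℕ) := by
    ext m
    simp only [Finset.mem_filter, Finset.mem_range]
    have := j.isLt
    omega
  rw [hfil]
  rw [← Finset.sum_range_reflect (fun m => 1/((m:ℝ)+1)) (j:ℕ)]
  refine Finset.sum_congr rfl fun m hm => ?_
  have hm' : m < (j:ℕ) := Finset.mem_range.mp hm
  have hcast : (((j:ℕ) - 1 - m : ℕ):ℝ) = ((j:ℕ):ℝ) - (m:ℝ) - 1 := by
    have h3 : ((j:ℕ) - 1 - m : ℕ) = (j:ℕ) - (m+1) := by omega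
    rw [h3, Nat.cast_sub (by omega)]
    push_cast; ring
  rw [hcast]
  ring_nf

/-- Integral bound for the quadratic forms. -/
lemma ccub_Qint {H : Type*} [NormedAddCommGroup H] [InnerProductSpace ℝ H] {k : ℕ}
    (z : Fin k → H) (hz : ∀ i, ‖z i‖ ≤ 1) (d : ℕ)
    (trig : ℝ → ℝ) (htrig : Continuous trig)
    (horth : ∀ p q : ℕ, q ≠ 0 →
      (∫ θ in (0:ℝ)..(2*π), trig ((p:ℝ)*θ) * trig ((q:ℝ)*θ)) = if p = q then π else 0) :
    (∫ θ in (0:ℝ)..(2*π), ∑ i : Fin k, ∑ j : Fin k,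
        trig (((i.val+1 : ℕ) : ℝ)*θ) * trig (((j.val+1 : ℕ) : ℝ)*θ) * ⟪z i, z j⟫ ^ d)
      ≤ π * k := by
  classical
  have hcont : ∀ c : ℝ, Continuous fun θ : ℝ => trig (c*θ) :=
    fun c => htrig.comp (continuous_const.mul continuous_id)
  have hcont2 : ∀ (i j : Fin k), Continuous fun θ : ℝ =>
      trig (((i.val+1 : ℕ) : ℝ)*θ) * trig (((j.val+1 : ℕ) : ℝ)*θ) * ⟪z i, z j⟫ ^ d :=
    fun i j => ((hcont _).mul (hcont _)).mul continuous_const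
  rw [intervalIntegral.integral_finset_sum (fun i _ =>
    (continuous_finset_sum _ fun j _ => hcont2 i j).intervalIntegrable _ _)]
  have hterm : ∀ i : Fin k, (∫ θ in (0:ℝ)..(2*π), ∑ j : Fin k,
      trig (((i.val+1 : ℕ) : ℝ)*θ) * trig (((j.val+1 : ℕ) : ℝ)*θ) * ⟪z i, z j⟫ ^ d)
      = ⟪z i, z i⟫ ^ d * π := by
    intro i
    rw [intervalIntegral.integral_finset_sum (fun j _ => (hcont2 i j).intervalIntegrable _ _)]
    have hterm2 : ∀ j : Fin k, (∫ θ in (0:ℝ)..(2*π),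
        trig (((i.val+1 : ℕ) : ℝ)*θ) * trig (((j.val+1 : ℕ) : ℝ)*θ) * ⟪z i, z j⟫ ^ d)
        = (if j = i then ⟪z i, z j⟫ ^ d * π else 0) := by
      intro j
      rw [intervalIntegral.integral_mul_const, horth (i.val+1) (j.val+1) (by omega)]
      rcases eq_or_ne j i with rfl | hij
      · simp [mul_comm]
      · have : i.val+1 ≠ j.val+1 := by
          have : i.val ≠ j.val := fun h => hij (Fin.ext h.symm)
          omega
        simp [this, hij]
        intro h
        exact absurd (Fin.ext h.symm) hij
    rw [Finset.sum_congr rfl (fun j _ => hterm2 j)]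
    rw [Finset.sum_ite_eq' univ i (fun j => ⟪z i, z j⟫ ^ d * π)]
    simp
  rw [Finset.sum_congr rfl (fun i _ => hterm i)]
  have hbd : ∀ i : Fin k, ⟪z i, z i⟫ ^ d * π ≤ π := by
    intro i
    have h1 : (0:ℝ) ≤ ⟪z i, z i⟫ := real_inner_self_nonneg
    have h2 : ⟪z i, z i⟫ ≤ 1 := by
      have := real_inner_self_eq_norm_mul_norm (z i)
      nlinarith [hz i, norm_nonneg (z i)]
    nlinarith [pow_le_one₀ h1 h2 (n := d), pow_nonneg h1 d, Real.pi_pos]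
  calc ∑ i : Fin k, ⟪z i, z i⟫ ^ d * π ≤ ∑ _i : Fin k, π := Finset.sum_le_sum fun i _ => hbd i
    _ = π * k := by simp [mul_comm]

/-- Core inequality. -/
lemma ccub_core {H : Type*} [NormedAddCommGroup H] [InnerProductSpace ℝ H] {k D : ℕ}
    (a : ℕ → ℝ) (ε : ℝ) (hε0 : 0 < ε)
    (x y : Fin k → H) (hx : ∀ i, ‖x i‖ ≤ 1) (hy : ∀ i, ‖y i‖ ≤ 1)
    (hB : ∀ i j : Fin k, i < j → ε/2 ≤
      (∑ d ∈ Finset.Icc 1 D, a d * ⟪x i, y j⟫ ^ d)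
        - ∑ d ∈ Finset.Icc 1 D, a d * ⟪x j, y i⟫ ^ d) :
    ε * ((k:ℝ) * Real.log k - k) ≤ 2 * π * k * ∑ d ∈ Finset.Icc 1 D, |a d| := by
  classical
  set ν : Fin k → ℝ := fun i => ((i.val+1 : ℕ) : ℝ) with hν
  set q : ℝ → ℝ := fun t => ∑ d ∈ Finset.Icc 1 D, a d * t ^ d with hq
  set Bm : Fin k → Fin k → ℝ := fun i j => q ⟪x i, y j⟫ - q ⟪x j, y i⟫ with hBm
  set F : Fin k → Fin k → ℝ := fun i j => if i = j then 0 else Bm i j / (ν j - ν i) with hF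
  set P : ℝ → ℝ := fun θ => ∑ i, ∑ j, Real.sin ((ν j - ν i) * θ) * Bm i j with hP
  set Pd : ℕ → ℝ → ℝ :=
    fun d θ => ∑ i, ∑ j, Real.sin ((ν j - ν i) * θ) * ⟪x i, y j⟫ ^ d with hPd
  have hBm_lower : ∀ i j : Fin k, i < j → ε/2 ≤ Bm i j := by
    intro i j hij
    simpa [hBm, hq] using hB i j hij
  have hBskew : ∀ i j, Bm j i = - Bm i j := by
    intro i j; simp only [hBm]; ring
  have hgap_eq : ∀ i j : Fin k, ν j - ν i = ((j:ℕ):ℝ) - ((i:ℕ):ℝ) := by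
    intro i j; simp only [hν]; push_cast; ring
  have hgap : ∀ i j : Fin k, i < j → (0:ℝ) < ((j:ℕ):ℝ) - ((i:ℕ):ℝ) := by
    intro i j hij
    have h1 : (i:ℕ) < (j:ℕ) := hij
    have := Nat.cast_lt (α := ℝ) |>.mpr h1
    linarith
  have hFsym : ∀ i j, F j i = F i j := by
    intro i j
    rcases eq_or_ne i j with rfl | hij
    · rfl
    · simp only [hF, if_neg hij, if_neg (Ne.symm hij)]
      rw [hBskew i j, show ν i - ν j = -(ν j - ν i) by ring, neg_div_neg_eq]
  have hFdiag : ∀ i, F i i = 0 := by intro i; simp [hF]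
  -- Lower bound
  have hstep1 : ∀ j : Fin k,
      (ε/2) * Real.log (((j.val : ℕ):ℝ)+1) ≤ ∑ i : Fin k, (if i < j then F i j else 0) := by
    intro j
    have h1 : ∑ i : Fin k, (if i < j then (ε/2) * ((1:ℝ)/(((j:ℕ):ℝ) - ((i:ℕ):ℝ))) else 0)
        ≤ ∑ i : Fin k, (if i < j then F i j else 0) := by
      refine Finset.sum_le_sum fun i _ => ?_
      by_cases hij : i < j
      · simp only [hij, if_true]
        have hgap' := hgap i j hij
        have hne : i ≠ j := ne_of_lt hij
        simp only [hF, if_neg hne]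
        rw [hgap_eq i j, mul_one_div]
        exact (div_le_div_iff_of_pos_right hgap').mpr (hBm_lower i j hij)
      · simp [hij]
    have h2 : ∑ i : Fin k, (if i < j then (ε/2) * ((1:ℝ)/(((j:ℕ):ℝ) - ((i:ℕ):ℝ))) else 0)
        = (ε/2) * ∑ i : Fin k, (if i < j then (1:ℝ)/(((j:ℕ):ℝ) - ((i:ℕ):ℝ)) else 0) := by
      rw [Finset.mul_sum]
      exact Finset.sum_congr rfl fun i _ => by split_ifs <;> simp
    have h3 := ccub_innerharm j
    have h4 := ccub_harm (j:ℕ)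
    calc (ε/2) * Real.log (((j.val : ℕ):ℝ)+1)
        ≤ (ε/2) * ∑ m ∈ Finset.range (j:ℕ), 1/((m:ℝ)+1) :=
          mul_le_mul_of_nonneg_left h4 (by positivity)
      _ = ∑ i : Fin k, (if i < j then (ε/2) * ((1:ℝ)/(((j:ℕ):ℝ) - ((i:ℕ):ℝ))) else 0) := by
          rw [h2, h3]
      _ ≤ _ := h1
  have hlow : ε * ((k:ℝ) * Real.log k - k) ≤ ∑ i, ∑ j, F i j := by
    rw [ccub_pair F hFsym hFdiag]
    have hsum := Finset.sum_le_sum (fun j (_ : j ∈ (Finset.univ : Finset (Fin k))) => hstep1 j)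
    have e1 : ∑ j : Fin k, (ε/2) * Real.log (((j.val : ℕ):ℝ)+1)
        = ∑ r ∈ Finset.range k, (ε/2) * Real.log ((r:ℝ)+1) :=
      Fin.sum_univ_eq_sum_range (fun r => (ε/2) * Real.log ((r:ℝ)+1)) k
    have e2 : ∑ r ∈ Finset.range k, (ε/2) * Real.log ((r:ℝ)+1)
        = (ε/2) * ∑ r ∈ Finset.range k, Real.log ((r:ℝ)+1) := by
      rw [Finset.mul_sum]
    have hlf := ccub_logfac k
    have h5 : (ε/2) * ((k:ℝ) * Real.log k - k)
        ≤ ∑ j : Fin k, ∑ i : Fin k, (if i < j then F i j else 0) := by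
      calc (ε/2) * ((k:ℝ) * Real.log k - k)
          ≤ (ε/2) * ∑ r ∈ Finset.range k, Real.log ((r:ℝ)+1) :=
            mul_le_mul_of_nonneg_left hlf (by positivity)
        _ = ∑ j : Fin k, (ε/2) * Real.log (((j.val : ℕ):ℝ)+1) := by rw [e1, e2]
        _ ≤ _ := hsum
    linarith
  -- Integral identity
  have hterm : ∀ i j : Fin k,
      (∫ θ in (0:ℝ)..(2*π), ((π - θ)/2) * (Real.sin ((ν j - ν i)*θ) * Bm i j)) = π * F i j := by
    intro i j
    rcases eq_or_ne i j with rfl | hij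
    · have e : ∀ θ ∈ Set.uIcc (0:ℝ) (2*π),
          ((π - θ)/2) * (Real.sin ((ν i - ν i)*θ) * Bm i i) = 0 := by
        intro θ _; simp
      rw [intervalIntegral.integral_congr e]
      simp [hF]
    · have hm : ((j.val:ℤ) - (i.val:ℤ)) ≠ 0 := by
        have : i.val ≠ j.val := fun h => hij (Fin.ext h)
        omega
      have hcast : ((((j.val:ℤ) - (i.val:ℤ)) : ℤ) : ℝ) = ν j - ν i := by
        simp only [hν]; push_cast; ring
      have e2 : ∀ θ ∈ Set.uIcc (0:ℝ) (2*π),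
          ((π - θ)/2) * (Real.sin ((ν j - ν i)*θ) * Bm i j)
          = Bm i j * ((π - θ)/2 * Real.sin (((((j.val:ℤ) - (i.val:ℤ)) : ℤ) : ℝ)*θ)) := by
        intro θ _; rw [hcast]; ring
      rw [intervalIntegral.integral_congr e2, intervalIntegral.integral_const_mul,
        ccub_int_saw _ hm]
      simp only [hF, if_neg hij]
      rw [← hcast]
      ring
  have hW : ∑ i, ∑ j, F i j = (1/π) * ∫ θ in (0:ℝ)..(2*π), ((π - θ)/2) * P θ := by
    have e1 : ∀ θ ∈ Set.uIcc (0:ℝ) (2*π), ((π - θ)/2) * P θ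
        = ∑ i, ∑ j, ((π - θ)/2) * (Real.sin ((ν j - ν i)*θ) * Bm i j) := by
      intro θ _
      simp only [hP]
      rw [Finset.mul_sum]
      exact Finset.sum_congr rfl fun i _ => by
        rw [Finset.mul_sum]
    rw [intervalIntegral.integral_congr e1]
    rw [intervalIntegral.integral_finset_sum (fun i _ =>
      (continuous_finset_sum _ fun j _ => by fun_prop).intervalIntegrable _ _)]
    rw [Finset.sum_congr rfl (fun i (_ : i ∈ Finset.univ) => intervalIntegral.integral_finset_sum
      (fun j _ => ((by fun_prop : Continuous fun θ : ℝ =>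
        ((π - θ)/2) * (Real.sin ((ν j - ν i)*θ) * Bm i j))).intervalIntegrable _ _))]
    rw [Finset.sum_congr rfl (fun i _ => Finset.sum_congr rfl (fun j _ => hterm i j))]
    have e3 : ∑ i : Fin k, ∑ j : Fin k, π * F i j = π * ∑ i, ∑ j, F i j := by
      rw [Finset.mul_sum]
      exact Finset.sum_congr rfl fun i _ => by rw [Finset.mul_sum]
    rw [e3]
    field_simp
  -- Continuity
  have hPcont : Continuous P := by
    rw [hP]
    exact continuous_finset_sum _ fun i _ => continuous_finset_sum _ fun j _ => by fun_prop
  -- Quadratic forms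
  set Qc : ℕ → (Fin k → H) → ℝ → ℝ :=
    fun d z θ => ∑ i, ∑ j, Real.cos (ν i * θ) * Real.cos (ν j * θ) * ⟪z i, z j⟫ ^ d with hQc
  set Qs : ℕ → (Fin k → H) → ℝ → ℝ :=
    fun d z θ => ∑ i, ∑ j, Real.sin (ν i * θ) * Real.sin (ν j * θ) * ⟪z i, z j⟫ ^ d with hQs
  set Gd : ℕ → ℝ → ℝ :=
    fun d θ => ((Qc d x θ + Qs d y θ) + (Qs d x θ + Qc d y θ))/2 with hGd
  have hQccont : ∀ (d : ℕ) (z : Fin k → H), Continuous (Qc d z) := by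
    intro d z
    rw [hQc]
    exact continuous_finset_sum _ fun i _ => continuous_finset_sum _ fun j _ => by fun_prop
  have hQscont : ∀ (d : ℕ) (z : Fin k → H), Continuous (Qs d z) := by
    intro d z
    rw [hQs]
    exact continuous_finset_sum _ fun i _ => continuous_finset_sum _ fun j _ => by fun_prop
  have hGdcont : ∀ d : ℕ, Continuous (Gd d) := by
    intro d
    rw [hGd]
    exact (((hQccont d x).add (hQscont d y)).add ((hQscont d x).add (hQccont d y))).div_const 2
  have hQcint : ∀ (d : ℕ) (z : Fin k → H), (∀ i, ‖z i‖ ≤ 1) →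
      (∫ θ in (0:ℝ)..(2*π), Qc d z θ) ≤ π * k := by
    intro d z hz
    have hmain := ccub_Qint z hz d Real.cos Real.continuous_cos (fun p q hq => ccub_int_cc p q hq)
    have e : ∀ θ ∈ Set.uIcc (0:ℝ) (2*π), Qc d z θ = ∑ i : Fin k, ∑ j : Fin k,
        Real.cos (((i.val+1 : ℕ) : ℝ)*θ) * Real.cos (((j.val+1 : ℕ) : ℝ)*θ) * ⟪z i, z j⟫ ^ d := by
      intro θ _; simp only [hQc, hν]
    rw [intervalIntegral.integral_congr e]
    exact hmain
  have hQsint : ∀ (d : ℕ) (z : Fin k → H), (∀ i, ‖z i‖ ≤ 1) →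
      (∫ θ in (0:ℝ)..(2*π), Qs d z θ) ≤ π * k := by
    intro d z hz
    have hmain := ccub_Qint z hz d Real.sin Real.continuous_sin (fun p q hq => ccub_int_ss p q hq)
    have e : ∀ θ ∈ Set.uIcc (0:ℝ) (2*π), Qs d z θ = ∑ i : Fin k, ∑ j : Fin k,
        Real.sin (((i.val+1 : ℕ) : ℝ)*θ) * Real.sin (((j.val+1 : ℕ) : ℝ)*θ) * ⟪z i, z j⟫ ^ d := by
      intro θ _; simp only [hQs, hν]
    rw [intervalIntegral.integral_congr e]
    exact hmain
  have hGdint : ∀ d : ℕ, (∫ θ in (0:ℝ)..(2*π), Gd d θ) ≤ 2 * π * k := by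
    intro d
    have i1 := (hQccont d x).intervalIntegrable (μ := MeasureTheory.volume) 0 (2*π)
    have i2 := (hQscont d y).intervalIntegrable (μ := MeasureTheory.volume) 0 (2*π)
    have i3 := (hQscont d x).intervalIntegrable (μ := MeasureTheory.volume) 0 (2*π)
    have i4 := (hQccont d y).intervalIntegrable (μ := MeasureTheory.volume) 0 (2*π)
    have e : ∀ θ ∈ Set.uIcc (0:ℝ) (2*π),
        Gd d θ = ((Qc d x θ + Qs d y θ) + (Qs d x θ + Qc d y θ))/2 := by
      intro θ _; simp only [hGd]
    rw [intervalIntegral.integral_congr e, intervalIntegral.integral_div,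
      intervalIntegral.integral_add (i1.add i2) (i3.add i4),
      intervalIntegral.integral_add i1 i2, intervalIntegral.integral_add i3 i4]
    have b1 := hQcint d x hx
    have b2 := hQsint d y hy
    have b3 := hQsint d x hx
    have b4 := hQcint d y hy
    linarith
  -- Pointwise decomposition of P
  have hPid : ∀ θ : ℝ, P θ = 2 * ∑ d ∈ Finset.Icc 1 D, a d * Pd d θ := by
    intro θ
    have s1 : P θ = (∑ i, ∑ j, Real.sin ((ν j - ν i)*θ) * q ⟪x i, y j⟫)
        - (∑ i, ∑ j, Real.sin ((ν j - ν i)*θ) * q ⟪x j, y i⟫) := by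
      simp only [hP, hBm]
      rw [← Finset.sum_sub_distrib]
      refine Finset.sum_congr rfl fun i _ => ?_
      rw [← Finset.sum_sub_distrib]
      exact Finset.sum_congr rfl fun j _ => by ring
    have s2 : (∑ i, ∑ j, Real.sin ((ν j - ν i)*θ) * q ⟪x j, y i⟫)
        = - ∑ i, ∑ j, Real.sin ((ν j - ν i)*θ) * q ⟪x i, y j⟫ := by
      rw [Finset.sum_comm]
      have e : ∀ b a1 : Fin k, Real.sin ((ν b - ν a1)*θ) * q ⟪x b, y a1⟫
          = -(Real.sin ((ν a1 - ν b)*θ) * q ⟪x b, y a1⟫) := by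
        intro b a1
        rw [show (ν b - ν a1)*θ = -((ν a1 - ν b)*θ) by ring, Real.sin_neg]
        ring
      rw [Finset.sum_congr rfl (fun b _ => Finset.sum_congr rfl (fun a1 _ => e b a1))]
      simp only [Finset.sum_neg_distrib]
    have s3 : (∑ i, ∑ j, Real.sin ((ν j - ν i)*θ) * q ⟪x i, y j⟫)
        = ∑ d ∈ Finset.Icc 1 D, a d * Pd d θ := by
      simp only [hq, hPd]
      calc ∑ i : Fin k, ∑ j : Fin k,
            Real.sin ((ν j - ν i)*θ) * ∑ d ∈ Finset.Icc 1 D, a d * ⟪x i, y j⟫ ^ d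
          = ∑ i : Fin k, ∑ d ∈ Finset.Icc 1 D, ∑ j : Fin k,
              a d * (Real.sin ((ν j - ν i)*θ) * ⟪x i, y j⟫ ^ d) := by
            refine Finset.sum_congr rfl fun i _ => ?_
            rw [Finset.sum_comm]
            refine Finset.sum_congr rfl fun j _ => ?_
            rw [Finset.mul_sum]
            exact Finset.sum_congr rfl fun dd _ => by ring
        _ = ∑ d ∈ Finset.Icc 1 D, ∑ i : Fin k, ∑ j : Fin k,
              a d * (Real.sin ((ν j - ν i)*θ) * ⟪x i, y j⟫ ^ d) := Finset.sum_comm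
        _ = ∑ d ∈ Finset.Icc 1 D, a d * ∑ i : Fin k, ∑ j : Fin k,
              Real.sin ((ν j - ν i)*θ) * ⟪x i, y j⟫ ^ d := by
            refine Finset.sum_congr rfl fun dd _ => ?_
            rw [Finset.mul_sum]
            exact Finset.sum_congr rfl fun i _ => by rw [Finset.mul_sum]
    rw [s1, s2, s3]
    ring
  -- Pointwise bound on Pd
  have hPdbd : ∀ (d : ℕ) (θ : ℝ), |Pd d θ| ≤ Gd d θ := by
    intro d θ
    have split : Pd d θ
        = (∑ i, ∑ j, Real.cos (ν i*θ) * Real.sin (ν j*θ) * ⟪x i, y j⟫^d)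
          - (∑ i, ∑ j, Real.sin (ν i*θ) * Real.cos (ν j*θ) * ⟪x i, y j⟫^d) := by
      simp only [hPd]
      rw [← Finset.sum_sub_distrib]
      refine Finset.sum_congr rfl fun i _ => ?_
      rw [← Finset.sum_sub_distrib]
      refine Finset.sum_congr rfl fun j _ => ?_
      rw [show (ν j - ν i)*θ = ν j*θ - ν i*θ by ring, Real.sin_sub]
      ring
    have c1 := ccub_cs_lemma x y (fun i => Real.cos (ν i*θ)) (fun j => Real.sin (ν j*θ)) d
    have c2 := ccub_cs_lemma x y (fun i => Real.sin (ν i*θ)) (fun j => Real.cos (ν j*θ)) d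
    rw [split]
    simp only [hGd, hQc, hQs]
    have habs : |(∑ i, ∑ j, Real.cos (ν i*θ) * Real.sin (ν j*θ) * ⟪x i, y j⟫^d)
        - (∑ i, ∑ j, Real.sin (ν i*θ) * Real.cos (ν j*θ) * ⟪x i, y j⟫^d)|
        ≤ |∑ i, ∑ j, Real.cos (ν i*θ) * Real.sin (ν j*θ) * ⟪x i, y j⟫^d|
          + |∑ i, ∑ j, Real.sin (ν i*θ) * Real.cos (ν j*θ) * ⟪x i, y j⟫^d| := abs_sub _ _
    linarith
  -- Pointwise bound on P and integral bound
  have hPptw : ∀ θ ∈ Set.Icc (0:ℝ) (2*π),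
      |P θ| ≤ 2 * ∑ d ∈ Finset.Icc 1 D, |a d| * Gd d θ := by
    intro θ _
    rw [hPid θ, abs_mul, abs_two]
    have h1 : |∑ d ∈ Finset.Icc 1 D, a d * Pd d θ|
        ≤ ∑ d ∈ Finset.Icc 1 D, |a d| * Gd d θ := by
      refine (Finset.abs_sum_le_sum_abs _ _).trans ?_
      refine Finset.sum_le_sum fun d _ => ?_
      rw [abs_mul]
      exact mul_le_mul_of_nonneg_left (hPdbd d θ) (abs_nonneg _)
    linarith [abs_nonneg (∑ d ∈ Finset.Icc 1 D, a d * Pd d θ)]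
  have hGint : IntervalIntegrable (fun θ => 2 * ∑ d ∈ Finset.Icc 1 D, |a d| * Gd d θ)
      MeasureTheory.volume 0 (2*π) :=
    (continuous_const.mul (continuous_finset_sum _ fun d _ =>
      continuous_const.mul (hGdcont d))).intervalIntegrable _ _
  have hPabs : (∫ θ in (0:ℝ)..(2*π), |P θ|)
      ≤ 2 * ((2 * π * k) * ∑ d ∈ Finset.Icc 1 D, |a d|) := by
    have step1 : (∫ θ in (0:ℝ)..(2*π), |P θ|)
        ≤ ∫ θ in (0:ℝ)..(2*π), 2 * ∑ d ∈ Finset.Icc 1 D, |a d| * Gd d θ :=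
      intervalIntegral.integral_mono_on (by positivity)
        (hPcont.abs.intervalIntegrable _ _) hGint hPptw
    have step2 : (∫ θ in (0:ℝ)..(2*π), 2 * ∑ d ∈ Finset.Icc 1 D, |a d| * Gd d θ)
        = 2 * ∑ d ∈ Finset.Icc 1 D, |a d| * ∫ θ in (0:ℝ)..(2*π), Gd d θ := by
      rw [intervalIntegral.integral_const_mul]
      congr 1
      rw [intervalIntegral.integral_finset_sum (fun d _ =>
        Continuous.intervalIntegrable (u := fun θ => |a d| * Gd d θ)
          (continuous_const.mul (hGdcont d)) _ _)]
      exact Finset.sum_congr rfl fun d _ => intervalIntegral.integral_const_mul _ _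
    have step3 : ∑ d ∈ Finset.Icc 1 D, |a d| * ∫ θ in (0:ℝ)..(2*π), Gd d θ
        ≤ ∑ d ∈ Finset.Icc 1 D, |a d| * (2 * π * k) :=
      Finset.sum_le_sum fun d _ => mul_le_mul_of_nonneg_left (hGdint d) (abs_nonneg _)
    have step4 : ∑ d ∈ Finset.Icc 1 D, |a d| * (2 * π * k)
        = (2 * π * k) * ∑ d ∈ Finset.Icc 1 D, |a d| := by
      rw [Finset.mul_sum]
      exact Finset.sum_congr rfl fun d _ => by ring
    calc (∫ θ in (0:ℝ)..(2*π), |P θ|)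
        ≤ 2 * ∑ d ∈ Finset.Icc 1 D, |a d| * ∫ θ in (0:ℝ)..(2*π), Gd d θ := by
          rw [← step2]; exact step1
      _ ≤ 2 * ((2 * π * k) * ∑ d ∈ Finset.Icc 1 D, |a d|) := by
          rw [← step4]; linarith
  have hintP1 : IntervalIntegrable (fun θ : ℝ => ((π - θ)/2) * P θ)
      MeasureTheory.volume 0 (2*π) :=
    (Continuous.mul (by fun_prop) hPcont).intervalIntegrable _ _
  have hintP2 : IntervalIntegrable (fun θ : ℝ => (π/2) * |P θ|)
      MeasureTheory.volume 0 (2*π) :=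
    (continuous_const.mul hPcont.abs).intervalIntegrable _ _
  have hsawbd : (∫ θ in (0:ℝ)..(2*π), ((π - θ)/2) * P θ)
      ≤ (π/2) * ∫ θ in (0:ℝ)..(2*π), |P θ| := by
    rw [← intervalIntegral.integral_const_mul]
    refine intervalIntegral.integral_mono_on (by positivity) hintP1 hintP2 ?_
    intro θ hθ
    obtain ⟨hθ0, hθ2⟩ := hθ
    have h2 : |(π - θ)/2| ≤ π/2 := by
      rw [abs_div, abs_two]
      have : |π - θ| ≤ π := abs_le.mpr ⟨by linarith, by linarith⟩
      linarith
    calc ((π - θ)/2) * P θ ≤ |((π - θ)/2) * P θ| := le_abs_self _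
      _ = |(π - θ)/2| * |P θ| := abs_mul _ _
      _ ≤ (π/2) * |P θ| := mul_le_mul_of_nonneg_right h2 (abs_nonneg _)
  -- Combine upper bound
  have hup : ∑ i, ∑ j, F i j ≤ 2 * π * k * ∑ d ∈ Finset.Icc 1 D, |a d| := by
    rw [hW]
    have hintPabs : (0:ℝ) ≤ ∫ θ in (0:ℝ)..(2*π), |P θ| :=
      intervalIntegral.integral_nonneg (by positivity) (fun θ _ => abs_nonneg _)
    calc (1/π) * ∫ θ in (0:ℝ)..(2*π), ((π - θ)/2) * P θ
        ≤ (1/π) * ((π/2) * ∫ θ in (0:ℝ)..(2*π), |P θ|) :=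
          mul_le_mul_of_nonneg_left hsawbd (by positivity)
      _ ≤ (1/π) * ((π/2) * (2 * ((2 * π * k) * ∑ d ∈ Finset.Icc 1 D, |a d|))) := by
          have h6 : (π/2) * (∫ θ in (0:ℝ)..(2*π), |P θ|)
              ≤ (π/2) * (2 * ((2 * π * k) * ∑ d ∈ Finset.Icc 1 D, |a d|)) :=
            mul_le_mul_of_nonneg_left hPabs (by positivity)
          exact mul_le_mul_of_nonneg_left h6 (by positivity)
      _ = 2 * π * k * ∑ d ∈ Finset.Icc 1 D, |a d| := by
          field_simp
  linarith

/-- Upper bound for continuous connectives via polynomial approximation. -/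
theorem continuous_connective_upper_bound
    {H : Type*} [NormedAddCommGroup H] [InnerProductSpace ℝ H]
    (ε : ℝ) (hε : ε ∈ Set.Ioo (0 : ℝ) 1) (g : ℝ → ℝ)
    (D : ℕ) (a : ℕ → ℝ)
    (happrox : ∀ t ∈ Set.Icc (-1 : ℝ) 1,
        |g t - (a 0 + ∑ d ∈ Finset.Icc 1 D, a d * t ^ d)| ≤ ε / 4)
    (hA : 0 < ∑ d ∈ Finset.Icc 1 D, |a d|)
    (k : ℕ) (x y : Fin k → H)
    (hx : ∀ i, ‖x i‖ ≤ 1) (hy : ∀ i, ‖y i‖ ≤ 1)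
    (hhg : ∀ i j : Fin k, i < j → ε ≤ g ⟪x i, y j⟫ - g ⟪x j, y i⟫) :
    Real.log k ≤ 2 * π * (∑ d ∈ Finset.Icc 1 D, |a d|) / ε + 1 := by
  obtain ⟨hε0, hε1⟩ := hε
  by_cases hk1 : (k:ℝ) ≤ 1
  · have h0 : Real.log k ≤ 0 := Real.log_nonpos (Nat.cast_nonneg k) hk1
    have h1 : (0:ℝ) ≤ 2 * π * (∑ d ∈ Finset.Icc 1 D, |a d|) / ε :=
      div_nonneg (by positivity) hε0.le
    linarith
  push_neg at hk1
  have hk0 : (0:ℝ) < k := by linarith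
  have hT : ∀ i j : Fin k, ⟪x i, y j⟫ ∈ Set.Icc (-1:ℝ) 1 := by
    intro i j
    have h1 : |(⟪x i, y j⟫ : ℝ)| ≤ 1 := by
      refine (abs_real_inner_le_norm (x i) (y j)).trans ?_
      calc ‖x i‖ * ‖y j‖ ≤ 1 * 1 :=
            mul_le_mul (hx i) (hy j) (norm_nonneg _) zero_le_one
        _ = 1 := mul_one 1
    exact Set.mem_Icc.mpr (abs_le.mp h1)
  have hB : ∀ i j : Fin k, i < j → ε/2 ≤
      (∑ d ∈ Finset.Icc 1 D, a d * ⟪x i, y j⟫ ^ d)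
        - ∑ d ∈ Finset.Icc 1 D, a d * ⟪x j, y i⟫ ^ d := by
    intro i j hij
    have h1 := abs_le.mp (happrox _ (hT i j))
    have h2 := abs_le.mp (happrox _ (hT j i))
    have h3 := hhg i j hij
    obtain ⟨h1a, h1b⟩ := h1
    obtain ⟨h2a, h2b⟩ := h2
    linarith
  have hcore := ccub_core a ε hε0 x y hx hy hB
  have hdiv : ε * (Real.log k - 1) ≤ 2 * π * ∑ d ∈ Finset.Icc 1 D, |a d| := by
    have e1 : ε * (Real.log k - 1) * k = ε * ((k:ℝ) * Real.log k - k) := by ring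
    have e2 : (2 * π * ∑ d ∈ Finset.Icc 1 D, |a d|) * k
        = 2 * π * k * ∑ d ∈ Finset.Icc 1 D, |a d| := by ring
    have h4 : ε * (Real.log k - 1) * k ≤ (2 * π * ∑ d ∈ Finset.Icc 1 D, |a d|) * k := by
      rw [e1, e2]; exact hcore
    exact le_of_mul_le_mul_right h4 hk0
  have h5 : Real.log k - 1 ≤ 2 * π * (∑ d ∈ Finset.Icc 1 D, |a d|) / ε := by
    rw [le_div_iff₀ hε0]
    nlinarith [hdiv]
  linarith
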